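/- Let R be a Noetherian F-finite commutative ring of characteristic p, let (M,C) be an F-pure q-Cartier module over R and let f ∈ R. Assume that the pair (M,f) satisfies the boundedness assumption and that M = M_{f!}. Then every α ∈ ν_f(q^∞;M) is the image in ℤ_p (under the embedding ℚ → ℚ_p) of a rational number r with −1 ≤ r < 0. -/

import Mathlib

open Pointwise Function

/-- The set of ν-invariants of level `m`. -/
def nuLevel {R M : Type*} [CommRing R] [AddCommGroup M] [Module R M]
    (C : M → M) (f : R) (N : Set M) (m : ℕ) : Set ℕ :=
  {n | C^[m] '' (f ^ n • N) ≠ C^[m] '' (f ^ (n + 1) • N)}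

/-- The set of ν-invariants of infinite level. -/
def nuInfinite {R M : Type*} [CommRing R] [AddCommGroup M] [Module R M]
    (p : ℕ) [Fact p.Prime] (q : ℕ) (C : M → M) (f : R) (N : Set M) : Set ℤ_[p] :=
  {α | ∀ m : ℕ, 1 ≤ m → ∃ n ∈ nuLevel C f N m, ((q : ℤ_[p]) ^ m) ∣ (α - (n : ℤ_[p]))}

/-- The submodule `M_{f!} = Σ_{m ≥ 0} C^m (f M)` of an F-pure `q`-Cartier module `(M, C)`. -/
def Mfbang {R M : Type*} [CommRing R] [AddCommGroup M] [Module R M]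
    (C : M → M) (f : R) : Submodule R M :=
  ⨆ m : ℕ, Submodule.span R (C^[m] '' (f • (Set.univ : Set M)))

section Aux
variable {R M : Type*} [CommRing R] [AddCommGroup M] [Module R M]
variable (C : M → M) (f : R) (q : ℕ)

def S (m n : ℕ) : Set M := C^[m] '' (f ^ n • (Set.univ : Set M))

lemma mem_S {m n : ℕ} {z : M} : z ∈ S C f m n ↔ ∃ y, C^[m] (f ^ n • y) = z := by
  constructor
  · rintro ⟨w, ⟨y, -, rfl⟩, rfl⟩
    exact ⟨y, rfl⟩
  · rintro ⟨y, rfl⟩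
    exact ⟨f ^ n • y, ⟨y, trivial, rfl⟩, rfl⟩

variable {q} (hCsl : ∀ (a : R) (x : M), C (a ^ q • x) = a • C x)

section
include hCsl

lemma iter_sl (m : ℕ) (a : R) (x : M) : C^[m] (a ^ q ^ m • x) = a • C^[m] x := by
  induction m generalizing x with
  | zero => simp
  | succ m ih =>
    rw [iterate_succ_apply, iterate_succ_apply]
    have : a ^ q ^ (m + 1) = (a ^ q ^ m) ^ q := by
      rw [← pow_mul, pow_succ, mul_comm]
    rw [this, hCsl, ih]

end

lemma S_antitone_succ (m n : ℕ) : S C f m (n + 1) ⊆ S C f m n := by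
  intro z hz
  rw [mem_S] at hz ⊢
  obtain ⟨y, rfl⟩ := hz
  exact ⟨f • y, by rw [smul_smul, ← pow_succ]⟩

lemma S_antitone (m : ℕ) : ∀ {n n' : ℕ}, n ≤ n' → S C f m n' ⊆ S C f m n := by
  intro n n' h
  induction n' with
  | zero => simp_all
  | succ k ih =>
    rcases Nat.lt_or_ge n (k+1) with h' | h'
    · exact (ih (Nat.lt_succ_iff.mp h')).trans' (S_antitone_succ C f m k)
    · have : n = k + 1 := le_antisymm h h'
      subst this; exact subset_rfl

lemma S_zero_eq_univ (hFpure : Function.Surjective C) (m : ℕ) :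
    S C f m 0 = Set.univ := by
  have h1 : (f ^ 0 : R) • (Set.univ : Set M) = Set.univ := by
    ext z; simp only [pow_zero, Set.mem_smul_set, Set.mem_univ, iff_true]
    exact ⟨z, trivial, one_smul R z⟩
  rw [S, h1, Set.image_univ, Surjective.range_eq (hFpure.iterate m)]

/-- pointwise key identity. -/
lemma key_elt (hCsl : ∀ (a : R) (x : M), C (a ^ q • x) = a • C x) (k m n r : ℕ) (y : M) :
    C^[k + m] (f ^ (n * q ^ m + r) • y) = C^[k] (f ^ n • C^[m] (f ^ r • y)) := by
  have h1 : f ^ (n * q ^ m + r) • y = (f ^ n) ^ q ^ m • f ^ r • y := by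
    rw [smul_smul, ← pow_mul, ← pow_add]
  rw [iterate_add_apply, h1, iter_sl C hCsl m]

/-- Key identity: `S (k+m) (n q^m + r) = C^[k] '' (f^n • S m r)`. -/
lemma S_key (hCsl : ∀ (a : R) (x : M), C (a ^ q • x) = a • C x) (k m n r : ℕ) :
    S C f (k + m) (n * q ^ m + r) = C^[k] '' (f ^ n • S C f m r) := by
  ext z
  constructor
  · rw [mem_S]
    rintro ⟨y, rfl⟩
    exact ⟨f ^ n • C^[m] (f ^ r • y),
      ⟨C^[m] (f ^ r • y), (mem_S C f).mpr ⟨y, rfl⟩, rfl⟩,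
      (key_elt C f hCsl k m n r y).symm⟩
  · rintro ⟨w, ⟨u, hu, rfl⟩, rfl⟩
    rw [mem_S C f] at hu
    obtain ⟨y, rfl⟩ := hu
    exact (mem_S C f).mpr ⟨y, key_elt C f hCsl k m n r y⟩


lemma nu_mem_iff {m n : ℕ} :
    n ∈ nuLevel C f (Set.univ : Set M) m ↔ S C f m n ≠ S C f m (n + 1) := Iff.rfl

variable {C f}
variable (hCsl : ∀ (a : R) (x : M), C (a ^ q • x) = a • C x)
variable (hFpure : Function.Surjective C)

include hCsl hFpure in
lemma S_block_const (k j t : ℕ) (h : S C f k t = S C f k (t + 1)) :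
    ∀ b ≤ q ^ j, S C f (k + j) (t * q ^ j + b) = S C f k t := by
  intro b hb
  have hup : S C f (k + j) (t * q ^ j) = S C f k t := by
    have := S_key C f hCsl k j t 0
    rw [add_zero] at this
    rw [this, S_zero_eq_univ C f hFpure, S]
  have hlow : S C f (k + j) ((t + 1) * q ^ j) = S C f k (t + 1) := by
    have := S_key C f hCsl k j (t + 1) 0
    rw [add_zero] at this
    rw [this, S_zero_eq_univ C f hFpure, S]
  apply Set.Subset.antisymm
  · rw [← hup]
    exact S_antitone C f (k + j) (Nat.le_add_right _ _)
  · rw [h, ← hlow]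
    apply S_antitone C f (k + j)
    rw [add_one_mul]
    exact Nat.add_le_add_left hb _

include hCsl hFpure in
/-- stripping low digits -/
lemma nu_strip {k j t b : ℕ} (hb : b < q ^ j)
    (hmem : (t * q ^ j + b) ∈ nuLevel C f (Set.univ : Set M) (k + j)) :
    t ∈ nuLevel C f (Set.univ : Set M) k := by
  rw [nu_mem_iff] at hmem ⊢
  intro h
  apply hmem
  rw [S_block_const hCsl hFpure k j t h b hb.le, Nat.add_assoc,
    S_block_const hCsl hFpure k j t h (b + 1) hb]

include hCsl hFpure in
lemma nu_extend {k t : ℕ}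
    (hmem : t ∈ nuLevel C f (Set.univ : Set M) k) :
    ∃ b < q, (t * q + b) ∈ nuLevel C f (Set.univ : Set M) (k + 1) := by
  by_contra hcon
  push_neg at hcon
  have hconst : ∀ c ≤ q, S C f (k + 1) (t * q) = S C f (k + 1) (t * q + c) := by
    intro c hc
    induction c with
    | zero => rfl
    | succ c ih =>
      have h1 := hcon c (lt_of_lt_of_le (Nat.lt_succ_self c) hc)
      rw [nu_mem_iff, not_not] at h1
      rw [ih (le_of_lt (Nat.lt_of_succ_le hc)), h1, Nat.add_assoc]
  have hup : S C f (k + 1) (t * q) = S C f k t := by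
    have := S_key C f hCsl k 1 t 0
    rw [add_zero, pow_one] at this
    rw [this, S_zero_eq_univ C f hFpure, S]
  have hlow : S C f (k + 1) ((t + 1) * q) = S C f k (t + 1) := by
    have := S_key C f hCsl k 1 (t + 1) 0
    rw [add_zero, pow_one] at this
    rw [this, S_zero_eq_univ C f hFpure, S]
  rw [nu_mem_iff] at hmem
  apply hmem
  rw [← hup, ← hlow, add_one_mul, ← hconst q le_rfl]

include hCsl in
lemma S_shift_eq {m n : ℕ} (h : S C f m n = S C f m (n + 1)) :
    S C f m (n + q ^ m) = S C f m (n + 1 + q ^ m) := by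
  have key : ∀ n' : ℕ, S C f m (n' + q ^ m) = f ^ 1 • S C f m n' := by
    intro n'
    have := S_key C f hCsl 0 m 1 n'
    rw [zero_add, one_mul, iterate_zero, Set.image_id] at this
    rw [add_comm, this]
  rw [key, key, h]

include hCsl in
lemma nu_reduce {m n : ℕ} (c : ℕ)
    (hmem : (n + c * q ^ m) ∈ nuLevel C f (Set.univ : Set M) m) :
    n ∈ nuLevel C f (Set.univ : Set M) m := by
  induction c with
  | zero => simpa using hmem
  | succ c ih =>
    apply ih
    rw [nu_mem_iff] at hmem ⊢
    intro h
    apply hmem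
    have e1 : n + (c + 1) * q ^ m = n + c * q ^ m + q ^ m := by ring
    have e2 : n + (c + 1) * q ^ m + 1 = n + c * q ^ m + 1 + q ^ m := by ring
    rw [e2, e1]
    exact S_shift_eq hCsl h

variable (hCadd : ∀ x y : M, C (x + y) = C x + C y)

include hCadd in
lemma iterC_zero (m : ℕ) : C^[m] 0 = 0 := by
  have h0 : C 0 = 0 := by
    have := hCadd 0 0
    rw [add_zero] at this
    simpa using this
  induction m with
  | zero => rfl
  | succ m ih => rw [iterate_succ_apply, h0, ih]

include hCadd in
lemma iterC_add (m : ℕ) (x y : M) : C^[m] (x + y) = C^[m] x + C^[m] y := by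
  induction m generalizing x y with
  | zero => rfl
  | succ m ih => rw [iterate_succ_apply, iterate_succ_apply, iterate_succ_apply, hCadd, ih]

/-- `S C f m 1` as a submodule. -/
def Psub (hCadd : ∀ x y : M, C (x + y) = C x + C y)
    (hCsl : ∀ (a : R) (x : M), C (a ^ q • x) = a • C x) (m : ℕ) : Submodule R M where
  carrier := S C f m 1
  zero_mem' := (mem_S C f).mpr ⟨0, by rw [smul_zero, iterC_zero hCadd]⟩
  add_mem' := by
    rintro a b ha hb
    rw [mem_S] at ha hb ⊢
    obtain ⟨y, rfl⟩ := ha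
    obtain ⟨z, rfl⟩ := hb
    exact ⟨y + z, by rw [smul_add, iterC_add hCadd]⟩
  smul_mem' := by
    intro a z hz
    rw [mem_S] at hz ⊢
    obtain ⟨y, rfl⟩ := hz
    refine ⟨a ^ q ^ m • y, ?_⟩
    rw [smul_comm, iter_sl C hCsl]

include hCsl hFpure in
lemma S_one_mono (hq1 : 1 ≤ q) (m : ℕ) : S C f m 1 ⊆ S C f (m + 1) 1 := by
  intro z hz
  rw [mem_S] at hz ⊢
  obtain ⟨y, rfl⟩ := hz
  obtain ⟨w, rfl⟩ := hFpure y
  refine ⟨f ^ (q - 1) • w, ?_⟩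
  have h1 : f ^ 1 • f ^ (q - 1) • w = f ^ q • w := by
    rw [smul_smul, ← pow_add]
    congr 2
    omega
  have h2 : C (f ^ q • w) = f ^ 1 • C w := by
    rw [pow_one]
    exact hCsl f w
  rw [h1, iterate_succ_apply, h2]

include hCsl hFpure in
lemma S_one_mono_le (hq1 : 1 ≤ q) {m m' : ℕ} (h : m ≤ m') : S C f m 1 ⊆ S C f m' 1 := by
  induction m', h using Nat.le_induction with
  | base => exact subset_rfl
  | succ m' hm ih => exact ih.trans (S_one_mono hCsl hFpure hq1 m')

include hCadd hCsl hFpure in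
lemma exists_m0 [IsNoetherianRing R] [Module.Finite R M] (hq1 : 1 ≤ q)
    (hMf : Mfbang C f = ⊤) :
    ∃ m₀ : ℕ, ∀ m, m₀ ≤ m → S C f m 1 = Set.univ := by
  have hPmono : Monotone (fun m => Psub (f := f) hCadd hCsl m : ℕ → Submodule R M) := by
    apply monotone_nat_of_le_succ
    intro m
    exact S_one_mono hCsl hFpure hq1 m
  obtain ⟨n₀, hn₀⟩ := monotone_stabilizes_iff_noetherian.mpr inferInstance
    ⟨fun m => Psub (f := f) hCadd hCsl m, hPmono⟩
  have hspan : ∀ m : ℕ, Submodule.span R (C^[m] '' (f • (Set.univ : Set M)))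
      = Psub (f := f) hCadd hCsl m := by
    intro m
    have : C^[m] '' (f • (Set.univ : Set M)) = S C f m 1 := by
      rw [S, pow_one]
    rw [this]
    exact Submodule.span_eq (Psub (f := f) hCadd hCsl m)
  have htop : Psub (f := f) hCadd hCsl n₀ = ⊤ := by
    rw [eq_top_iff, ← hMf, Mfbang]
    apply iSup_le
    intro m
    rw [hspan m]
    rcases le_total m n₀ with h | h
    · exact hPmono h
    · exact le_of_eq (hn₀ m h).symm
  refine ⟨n₀, fun m hm => ?_⟩
  apply Set.eq_univ_of_univ_subset
  have : S C f n₀ 1 = Set.univ := by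
    apply Set.eq_univ_of_forall
    intro x
    have : x ∈ Psub (f := f) hCadd hCsl n₀ := htop ▸ Submodule.mem_top
    exact this
  rw [← this]
  exact S_one_mono_le hCsl hFpure hq1 hm

end Aux

section Padic

variable (p : ℕ) [hp : Fact p.Prime] (e q : ℕ)

/-- level-`m` truncation of `α` in base `q = p^e`. -/
noncomputable def Nfun (α : ℤ_[p]) (m : ℕ) : ℕ := α.appr (e * m)

/-- level-`m` truncation of the `j`-th tail of `α`. -/
noncomputable def Tfun (α : ℤ_[p]) (j m : ℕ) : ℕ := Nfun p e α (j + m) / q ^ j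

variable (hq : q = p ^ e) (α : ℤ_[p])

include hq in
lemma q_cast_pow (m : ℕ) : ((q : ℤ_[p]) ^ m) = (p : ℤ_[p]) ^ (e * m) := by
  subst hq
  push_cast
  rw [← pow_mul]

include hq in
lemma Nfun_lt (m : ℕ) : Nfun p e α m < q ^ m := by
  subst hq
  rw [← pow_mul]
  exact PadicInt.appr_lt α (e * m)

lemma Nfun_dvd (m : ℕ) : (p : ℤ_[p]) ^ (e * m) ∣ α - Nfun p e α m := by
  have := PadicInt.appr_spec (e * m) α
  rwa [Ideal.mem_span_singleton] at this

/-- transfer of `p`-adic divisibility to congruence of naturals. -/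
lemma nat_mod_eq_of_padic {a b k : ℕ} (h : (p : ℤ_[p]) ^ k ∣ (a : ℤ_[p]) - b) :
    a % p ^ k = b % p ^ k := by
  have h2 : ((p ^ k : ℤ)) ∣ ((a : ℤ) - b) := by
    rw [← PadicInt.pow_p_dvd_int_iff]
    push_cast
    exact h
  have h3 : b ≡ a [MOD p ^ k] := by
    rw [Nat.modEq_iff_dvd]
    push_cast
    exact h2
  exact h3.symm

include hq in
lemma Nfun_mod {m' m : ℕ} (h : m' ≤ m) :
    Nfun p e α m % q ^ m' = Nfun p e α m' := by
  have h1 : (p : ℤ_[p]) ^ (e * m') ∣ ((Nfun p e α m : ℤ_[p])) - Nfun p e α m' := by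
    have d1 := Nfun_dvd p e α m
    have d2 := Nfun_dvd p e α m'
    have d1' : (p : ℤ_[p]) ^ (e * m') ∣ α - Nfun p e α m :=
      dvd_trans (pow_dvd_pow _ (Nat.mul_le_mul_left e h)) d1
    have : ((Nfun p e α m : ℤ_[p])) - Nfun p e α m'
        = (α - Nfun p e α m') - (α - Nfun p e α m) := by ring
    rw [this]
    exact dvd_sub d2 d1'
  have h2 := nat_mod_eq_of_padic p h1
  have hlt := Nfun_lt p e q hq α m'
  rw [hq, ← pow_mul] at hlt ⊢
  rw [h2, Nat.mod_eq_of_lt hlt]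

end Padic




section Interaction

variable {R M : Type*} [CommRing R] [AddCommGroup M] [Module R M]
variable {C : M → M} {f : R}
variable (p : ℕ) [hp : Fact p.Prime] (e q : ℕ) (hq : q = p ^ e) (α : ℤ_[p])
variable (hCsl : ∀ (a : R) (x : M), C (a ^ q • x) = a • C x)
variable (hFpure : Function.Surjective C)
variable (hα : α ∈ nuInfinite p q C f (Set.univ : Set M))

include hq in
lemma q_pos : 0 < q := by
  subst hq
  exact pow_pos hp.out.pos e

include hq hCsl hα in
lemma Nfun_mem {m : ℕ} (hm : 1 ≤ m) :
    Nfun p e α m ∈ nuLevel C f (Set.univ : Set M) m := by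
  obtain ⟨n, hn, hdvd⟩ := hα m hm
  rw [q_cast_pow p e q hq] at hdvd
  have h2 : (p : ℤ_[p]) ^ (e * m) ∣ ((n : ℤ_[p])) - Nfun p e α m := by
    have d1 := Nfun_dvd p e α m
    have : ((n : ℤ_[p])) - Nfun p e α m = (α - Nfun p e α m) - (α - n) := by ring
    rw [this]
    exact dvd_sub d1 hdvd
  have h3 := nat_mod_eq_of_padic p h2
  have h4 : n % q ^ m = Nfun p e α m := by
    rw [hq, ← pow_mul, h3, Nat.mod_eq_of_lt]
    have := Nfun_lt p e q hq α m
    rwa [hq, ← pow_mul] at this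
  have h5 : n = Nfun p e α m + (n / q ^ m) * q ^ m := by
    conv_lhs => rw [← Nat.div_add_mod n (q ^ m)]
    rw [h4]
    ring
  rw [h5] at hn
  exact nu_reduce hCsl (n / q ^ m) hn

include hq in
lemma Tfun_lt (j m : ℕ) : Tfun p e q α j m < q ^ m := by
  rw [Tfun, Nat.div_lt_iff_lt_mul (pow_pos (q_pos p e q hq) j), ← pow_add]
  rw [Nat.add_comm m j]
  exact Nfun_lt p e q hq α (j + m)

include hq hCsl hFpure hα in
lemma Tfun_mem {m : ℕ} (hm : 1 ≤ m) (j : ℕ) :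
    Tfun p e q α j m ∈ nuLevel C f (Set.univ : Set M) m := by
  have hmem := Nfun_mem p e q hq α hCsl hα (m := j + m) (le_add_left hm)
  have hsplit : Nfun p e α (j + m)
      = Tfun p e q α j m * q ^ j + Nfun p e α (j + m) % q ^ j := by
    rw [Tfun, Nat.mul_comm]
    exact (Nat.div_add_mod _ _).symm
  rw [hsplit] at hmem
  rw [Nat.add_comm j m] at hmem
  exact nu_strip hCsl hFpure (Nat.mod_lt _ (pow_pos (q_pos p e q hq) j)) hmem

lemma Tfun_zero (m : ℕ) : Tfun p e q α 0 m = Nfun p e α m := by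
  rw [Tfun, pow_zero, Nat.div_one, Nat.zero_add]

include hq in
lemma Tfun_mod (j : ℕ) {m' m : ℕ} (h : m' ≤ m) :
    Tfun p e q α j m % q ^ m' = Tfun p e q α j m' := by
  rw [Tfun, ← Nat.mod_mul_right_div_self, ← pow_add,
    Nfun_mod p e q hq α (Nat.add_le_add_left h j), Tfun]

include hq in
lemma Tfun_succ (j m : ℕ) :
    Tfun p e q α j (m + 1) = Tfun p e q α (j + 1) m * q + Nfun p e α (j + 1) / q ^ j := by
  have e1 : j + (m + 1) = (j + 1) + m := by omega
  rw [Tfun, e1]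
  have e2 : Nfun p e α ((j + 1) + m) / q ^ j
      = q * (Tfun p e q α (j + 1) m) + (Nfun p e α ((j + 1) + m) / q ^ j) % q := by
    conv_lhs => rw [← Nat.div_add_mod (Nfun p e α ((j + 1) + m) / q ^ j) q]
    rw [Tfun, Nat.div_div_eq_div_mul, ← pow_succ]
  have e3 : (Nfun p e α ((j + 1) + m) / q ^ j) % q = Nfun p e α (j + 1) / q ^ j := by
    rw [← Nat.mod_mul_right_div_self, ← pow_succ,
      Nfun_mod p e q hq α (by omega : j + 1 ≤ (j + 1) + m)]
  rw [e2, e3, Nat.mul_comm]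

include hq in
lemma dfun_lt (j : ℕ) : Nfun p e α (j + 1) / q ^ j < q := by
  rw [Nat.div_lt_iff_lt_mul (pow_pos (q_pos p e q hq) j), ← pow_succ']
  exact Nfun_lt p e q hq α (j + 1)

end Interaction

section Counting

variable {R M : Type*} [CommRing R] [AddCommGroup M] [Module R M]
variable {C : M → M} {f : R} {q : ℕ}

/-- the bounded set of ν-invariants of level `m`. -/
def NuB (C : M → M) (f : R) (q m : ℕ) : Set ℕ :=
  {n : ℕ | n < q ^ m ∧ n ∈ nuLevel C f (Set.univ : Set M) m}

lemma NuB_finite (m : ℕ) : (NuB C f q m).Finite :=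
  (Set.finite_Iio (q ^ m)).subset (fun _ hx => hx.1)

variable (hCsl : ∀ (a : R) (x : M), C (a ^ q • x) = a • C x)
variable (hFpure : Function.Surjective C)

include hCsl hFpure in
lemma NuB_image (hq0 : 0 < q) (m : ℕ) :
    (fun j => j / q) '' NuB C f q (m + 1) = NuB C f q m := by
  apply Set.Subset.antisymm
  · rintro _ ⟨j, ⟨hjlt, hjmem⟩, rfl⟩
    constructor
    · rw [Nat.div_lt_iff_lt_mul hq0, ← pow_succ]
      exact hjlt
    · have hsplit : j = (j / q) * q ^ 1 + j % q := by
        rw [pow_one, Nat.mul_comm]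
        exact (Nat.div_add_mod j q).symm
      rw [hsplit] at hjmem
      refine nu_strip hCsl hFpure ?_ hjmem
      rw [pow_one]
      exact Nat.mod_lt _ hq0
  · rintro t ⟨htlt, htmem⟩
    obtain ⟨b, hb, hmem⟩ := nu_extend hCsl hFpure htmem
    refine ⟨t * q + b, ⟨?_, hmem⟩, ?_⟩
    · calc t * q + b < t * q + q := by omega
        _ = (t + 1) * q := by ring
        _ ≤ q ^ m * q := Nat.mul_le_mul_right _ htlt
        _ = q ^ (m + 1) := (pow_succ q m).symm
    · show (t * q + b) / q = t
      rw [Nat.mul_comm, Nat.mul_add_div hq0, Nat.div_eq_of_lt hb, Nat.add_zero]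

include hCsl hFpure in
lemma NuB_card_mono (hq0 : 0 < q) (m : ℕ) :
    (NuB C f q m).ncard ≤ (NuB C f q (m + 1)).ncard := by
  rw [← NuB_image hCsl hFpure hq0 m]
  exact Set.ncard_image_le (NuB_finite (m + 1))

lemma exists_stab (L : ℕ) (g : ℕ → ℕ) (mono : ∀ m, g m ≤ g (m + 1))
    (bound : ∀ m, g m ≤ L) : ∃ K, ∀ m, K ≤ m → g m = g K := by
  have hmono : Monotone g := monotone_nat_of_le_succ mono
  have hfin : (Set.range g).Finite :=
    (Set.finite_Iic L).subset (by rintro _ ⟨m, rfl⟩; exact bound m)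
  obtain ⟨a, ⟨K, rfl⟩, hmax⟩ := hfin.exists_maximal ⟨g 0, ⟨0, rfl⟩⟩
  exact ⟨K, fun m hm => le_antisymm (hmax ⟨m, rfl⟩ (hmono hm)) (hmono hm)⟩

include hCsl hFpure in
lemma NuB_injOn (hq0 : 0 < q) {m : ℕ}
    (hstab : (NuB C f q (m + 1)).ncard = (NuB C f q m).ncard) :
    Set.InjOn (fun j => j / q) (NuB C f q (m + 1)) := by
  have h1 : ((NuB_finite (m + 1) : (NuB C f q (m + 1)).Finite).toFinset.image
      (fun j => j / q)) = (NuB_finite m : (NuB C f q m).Finite).toFinset := by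
    apply Finset.coe_injective
    rw [Finset.coe_image, Set.Finite.coe_toFinset, Set.Finite.coe_toFinset]
    exact NuB_image hCsl hFpure hq0 m
  have h2 : Set.InjOn (fun j => j / q)
      ((NuB_finite (m + 1) : (NuB C f q (m + 1)).Finite).toFinset : Set ℕ) := by
    apply Finset.card_image_iff.mp
    rw [h1, ← Set.ncard_eq_toFinset_card _ (NuB_finite (m + 1)),
      ← Set.ncard_eq_toFinset_card _ (NuB_finite m)]
    exact hstab.symm
  rwa [Set.Finite.coe_toFinset] at h2

include hCsl hFpure in
lemma digit_unique (hq0 : 0 < q) {m : ℕ}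
    (hstab : (NuB C f q (m + 1)).ncard = (NuB C f q m).ncard)
    {t d d' : ℕ} (hd : d < q) (hd' : d' < q)
    (h1 : t * q + d ∈ NuB C f q (m + 1)) (h2 : t * q + d' ∈ NuB C f q (m + 1)) :
    d = d' := by
  have hdiv : ∀ b, b < q → (t * q + b) / q = t := by
    intro b hb
    rw [Nat.mul_comm, Nat.mul_add_div hq0, Nat.div_eq_of_lt hb, Nat.add_zero]
  have := NuB_injOn hCsl hFpure hq0 hstab h1 h2 (by simp only; rw [hdiv d hd, hdiv d' hd'])
  omega

end Counting

theorem stmt17 {R M : Type*} [CommRing R] [AddCommGroup M] [Module R M]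
    (p : ℕ) [Fact p.Prime] [CharP R p] [IsNoetherianRing R]
    (hFF : (frobenius R p).Finite)
    (e q : ℕ) (he : 1 ≤ e) (hq : q = p ^ e)
    (C : M → M) (hCadd : ∀ x y : M, C (x + y) = C x + C y)
    (hCsl : ∀ (a : R) (x : M), C (a ^ q • x) = a • C x)
    [Module.Finite R M] (hFpure : Function.Surjective C) (f : R)
    (hbound : ∃ L : ℕ, ∀ m : ℕ, 1 ≤ m →
      {n : ℕ | n < q ^ m ∧ n ∈ nuLevel C f (Set.univ : Set M) m}.ncard ≤ L)
    (hMf : Mfbang C f = ⊤) :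
    ∀ α ∈ nuInfinite p q C f (Set.univ : Set M),
      ∃ r : ℚ, -1 ≤ r ∧ r < 0 ∧ (α : ℚ_[p]) = (r : ℚ_[p]) := by
  intro α hα
  have hp : Fact p.Prime := inferInstance
  have hq0 : 0 < q := q_pos p e q hq
  have hq2 : 2 ≤ q := by
    calc (2 : ℕ) = 2 ^ 1 := rfl
      _ ≤ 2 ^ e := Nat.pow_le_pow_right (by norm_num) he
      _ ≤ p ^ e := Nat.pow_le_pow_left hp.out.two_le e
      _ = q := hq.symm
  obtain ⟨L, hL⟩ := hbound
  obtain ⟨m₀, hm₀⟩ := exists_m0 hCsl hFpure hCadd hq0 hMf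
  -- zero is not a ν-invariant at high levels
  have hzero : ∀ m, m₀ ≤ m → (0 : ℕ) ∉ nuLevel C f (Set.univ : Set M) m := by
    intro m hm hmem
    rw [nu_mem_iff] at hmem
    apply hmem
    show S C f m 0 = S C f m (0 + 1)
    have h1 : S C f m (0 + 1) = S C f m 1 := by norm_num
    rw [S_zero_eq_univ C f hFpure m, h1, hm₀ m hm]
  -- counting function
  set g : ℕ → ℕ := fun m => (NuB C f q m).ncard with hg
  have hgmono : ∀ m, g m ≤ g (m + 1) := fun m => NuB_card_mono hCsl hFpure hq0 m
  have hgbound : ∀ m, g m ≤ L := by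
    intro m
    match m with
    | 0 => exact le_trans (hgmono 0) (hL 1 le_rfl)
    | (m + 1) => exact hL (m + 1) (Nat.succ_le_succ (Nat.zero_le m))
  obtain ⟨K, hK⟩ := exists_stab L g hgmono hgbound
  have hstabm : ∀ m, K ≤ m → (NuB C f q (m + 1)).ncard = (NuB C f q m).ncard := by
    intro m hm
    show g (m + 1) = g m
    rw [hK (m + 1) (le_trans hm (Nat.le_succ m)), hK m hm]
  -- membership of truncations
  have hTfull : ∀ j m, 1 ≤ m → Tfun p e q α j m ∈ NuB C f q m := by
    intro j m hm
    exact ⟨Tfun_lt p e q hq α j m, Tfun_mem p e q hq α hCsl hFpure hα hm j⟩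
  -- pigeonhole at each level
  have hpair : ∀ m : ℕ, ∃ v : Fin (L + 1) × Fin (L + 1), (v.1 : ℕ) ≠ (v.2 : ℕ) ∧
      Tfun p e q α (v.1 : ℕ) (m + 1) = Tfun p e q α (v.2 : ℕ) (m + 1) := by
    intro m
    have hmaps : ∀ k ∈ Finset.range (L + 1),
        Tfun p e q α k (m + 1) ∈ (NuB_finite (C := C) (f := f) (q := q) (m + 1)).toFinset := by
      intro k _
      rw [Set.Finite.mem_toFinset]
      exact hTfull k (m + 1) (Nat.succ_le_succ (Nat.zero_le m))
    have hcard : (NuB_finite (C := C) (f := f) (q := q) (m + 1)).toFinset.card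
        < (Finset.range (L + 1)).card := by
      rw [Finset.card_range, ← Set.ncard_eq_toFinset_card _ (NuB_finite (m + 1))]
      exact Nat.lt_succ_of_le (hgbound (m + 1))
    obtain ⟨i, hi, j, hj, hij, heq⟩ :=
      Finset.exists_ne_map_eq_of_card_lt_of_maps_to hcard hmaps
    rw [Finset.mem_range] at hi hj
    exact ⟨(⟨i, hi⟩, ⟨j, hj⟩), by simpa using hij, heq⟩
  choose G hG1 hG2 using hpair
  obtain ⟨v, hv⟩ := Finite.exists_infinite_fiber G
  rw [Set.infinite_coe_iff] at hv
  obtain ⟨m1, hm1⟩ := hv.nonempty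
  have hab : (v.1.1 : ℕ) ≠ (v.2.1 : ℕ) := by
    have := hG1 m1
    rw [hm1] at this
    exact this
  -- the two tails agree at every level
  have hTae : ∀ m, 1 ≤ m →
      Tfun p e q α (v.1.1 : ℕ) m = Tfun p e q α (v.2.1 : ℕ) m := by
    intro m hm
    obtain ⟨m2, hm2mem, hm2gt⟩ := hv.exists_gt m
    have hGm2 : G m2 = v := hm2mem
    have heq := hG2 m2
    rw [hGm2] at heq
    have h1 := Tfun_mod p e q hq α (v.1.1 : ℕ) (le_of_lt (Nat.lt_succ_of_lt hm2gt))
    have h2 := Tfun_mod p e q hq α (v.2.1 : ℕ) (le_of_lt (Nat.lt_succ_of_lt hm2gt))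
    rw [← h1, ← h2, heq]
  -- normalize the pair : i0 and i0 + s
  set a : ℕ := (v.1.1 : ℕ)
  set b : ℕ := (v.2.1 : ℕ)
  set i0 : ℕ := min a b with hi0
  set s : ℕ := max a b - min a b with hs
  have hs1 : 1 ≤ s := by
    rcases Nat.lt_or_ge a b with h | h
    · simp [hs]; omega
    · simp [hs]; omega
  have hTs : ∀ m, 1 ≤ m → Tfun p e q α i0 m = Tfun p e q α (i0 + s) m := by
    intro m hm
    rcases le_total a b with h | h
    · have h1 : i0 = a := by omega
      have h2 : a + s = b := by omega
      rw [h1, h2]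
      exact hTae m hm
    · have h1 : i0 = b := by omega
      have h2 : b + s = a := by omega
      rw [h1, h2]
      exact (hTae m hm).symm
  -- downward induction on the tail index
  have hstep : ∀ k : ℕ,
      (∀ m, 1 ≤ m → Tfun p e q α (k + 1) m = Tfun p e q α (k + 1 + s) m) →
      (∀ m, 1 ≤ m → Tfun p e q α k m = Tfun p e q α (k + s) m) := by
    intro k ih m hm
    -- first prove it for large levels
    have hbig : ∀ mm, K ≤ mm → 1 ≤ mm →
        Tfun p e q α k (mm + 1) = Tfun p e q α (k + s) (mm + 1) := by
      intro mm hKmm hmm1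
      have e1 := Tfun_succ p e q hq α k mm
      have e2 := Tfun_succ p e q hq α (k + s) mm
      have e3 : k + s + 1 = k + 1 + s := by omega
      rw [e3, ← ih mm hmm1] at e2
      have hd1 : Nfun p e α (k + 1) / q ^ k < q := dfun_lt p e q hq α k
      have hd2 : Nfun p e α (k + 1 + s) / q ^ (k + s) < q := by
        have := dfun_lt p e q hq α (k + s)
        rwa [e3] at this
      have hmem1 : Tfun p e q α (k + 1) mm * q + Nfun p e α (k + 1) / q ^ k
          ∈ NuB C f q (mm + 1) := by
        rw [← e1]; exact hTfull k (mm + 1) (by omega)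
      have hmem2 : Tfun p e q α (k + 1) mm * q + Nfun p e α (k + 1 + s) / q ^ (k + s)
          ∈ NuB C f q (mm + 1) := by
        rw [← e2]; exact hTfull (k + s) (mm + 1) (by omega)
      have := digit_unique hCsl hFpure hq0 (hstabm mm hKmm) hd1 hd2 hmem1 hmem2
      rw [e1, e2, this]
    -- then reduce to the general level
    obtain ⟨mm, hmmeq⟩ : ∃ mm, max m (K + 2) = mm + 1 := by
      refine ⟨max m (K + 2) - 1, ?_⟩
      have hpos : 0 < max m (K + 2) := lt_of_lt_of_le (Nat.succ_pos (K + 1)) (le_max_right _ _)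
      omega
    have hKmm : K ≤ mm := by
      have h := le_max_right m (K + 2)
      omega
    have hmm1 : 1 ≤ mm := by
      have h := le_max_right m (K + 2)
      omega
    have hbig' := hbig mm hKmm hmm1
    have h1 := Tfun_mod p e q hq α k (le_trans (le_max_left m (K + 2)) (le_of_eq hmmeq))
    have h2 := Tfun_mod p e q hq α (k + s) (le_trans (le_max_left m (K + 2)) (le_of_eq hmmeq))
    rw [← h1, ← h2, hbig']
  have hQ0 : ∀ m, 1 ≤ m → Tfun p e q α 0 m = Tfun p e q α s m := by
    have haux : ∀ k, (∀ m, 1 ≤ m → Tfun p e q α k m = Tfun p e q α (k + s) m) →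
        (∀ m, 1 ≤ m → Tfun p e q α 0 m = Tfun p e q α s m) := by
      intro k
      induction k with
      | zero => intro h m hm; have := h m hm; rwa [Nat.zero_add] at this
      | succ k ihk => intro h; exact ihk (hstep k h)
    exact haux i0 hTs
  -- the recurrence for truncations
  have hrec : ∀ m, 1 ≤ m →
      Nfun p e α (s + m) = q ^ s * Nfun p e α m + Nfun p e α s := by
    intro m hm
    have h1 : Nfun p e α (s + m) / q ^ s = Nfun p e α m := by
      have := (hQ0 m hm).symm
      rwa [Tfun_zero, Tfun] at this
    have h2 : Nfun p e α (s + m) % q ^ s = Nfun p e α s :=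
      Nfun_mod p e q hq α (Nat.le_add_right s m)
    conv_lhs => rw [← Nat.div_add_mod (Nfun p e α (s + m)) (q ^ s)]
    rw [h1, h2]
  -- the constant term is nonzero
  have hNs : 1 ≤ Nfun p e α s := by
    by_contra hcon
    push_neg at hcon
    have hNs0 : Nfun p e α s = 0 := by omega
    have hall : ∀ k, Nfun p e α ((k + 1) * s) = 0 := by
      intro k
      induction k with
      | zero => rwa [Nat.one_mul]
      | succ k ihk =>
        have e1 : (k + 1 + 1) * s = s + (k + 1) * s := by ring
        rw [e1, hrec ((k + 1) * s) (Nat.mul_pos (Nat.succ_pos k) hs1), ihk, hNs0,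
          Nat.mul_zero, Nat.add_zero]
    have hlvl1 : 1 ≤ (m₀ + 1) * s := Nat.mul_pos (Nat.succ_pos m₀) hs1
    have hmem := Nfun_mem p e q hq α hCsl hα hlvl1
    rw [hall m₀] at hmem
    refine hzero _ ?_ hmem
    calc m₀ ≤ (m₀ + 1) * 1 := by omega
      _ ≤ (m₀ + 1) * s := Nat.mul_le_mul_left _ hs1
  -- the key p-adic identity
  set c : ℕ := Nfun p e α s with hc
  have hclt : c < q ^ s := Nfun_lt p e q hq α s
  have hdvdX : ∀ m, 1 ≤ m → (p : ℤ_[p]) ^ (e * m) ∣ (((q : ℤ_[p]) ^ s - 1) * α + c) := by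
    intro m hm
    have d1 := Nfun_dvd p e α m
    have d2 : (p : ℤ_[p]) ^ (e * m) ∣ α - Nfun p e α (s + m) :=
      dvd_trans (pow_dvd_pow _ (Nat.mul_le_mul_left e (Nat.le_add_left m s)))
        (Nfun_dvd p e α (s + m))
    have hrc : (Nfun p e α (s + m) : ℤ_[p]) = q ^ s * Nfun p e α m + c := by
      rw [hrec m hm]
      push_cast
      ring
    have hX : ((q : ℤ_[p]) ^ s - 1) * α + c
        = (q : ℤ_[p]) ^ s * (α - Nfun p e α m) - (α - Nfun p e α (s + m)) := by
      rw [hrc]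
      ring
    rw [hX]
    exact dvd_sub (Dvd.dvd.mul_left d1 _) d2
  have hX0 : ((q : ℤ_[p]) ^ s - 1) * α + c = 0 := by
    by_contra hne
    have hpos : 0 < ‖((q : ℤ_[p]) ^ s - 1) * α + c‖ := by
      rw [norm_pos_iff]
      exact hne
    obtain ⟨n, hn⟩ := pow_unbounded_of_one_lt (y := (p : ℝ))
      (‖((q : ℤ_[p]) ^ s - 1) * α + c‖⁻¹) (by exact_mod_cast hp.out.one_lt)
    have hnorm : ‖((q : ℤ_[p]) ^ s - 1) * α + c‖ ≤ (p : ℝ) ^ (-(e * (n + 1) : ℕ) : ℤ) := by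
      rw [PadicInt.norm_le_pow_iff_mem_span_pow, Ideal.mem_span_singleton]
      exact hdvdX (n + 1) (Nat.succ_le_succ (Nat.zero_le n))
    have hp1 : (1 : ℝ) < (p : ℝ) := by exact_mod_cast hp.out.one_lt
    have hple : (p : ℝ) ^ (n : ℕ) ≤ (p : ℝ) ^ (e * (n + 1) : ℕ) :=
      pow_le_pow_right₀ (le_of_lt hp1) (by nlinarith)
    have hinv : (p : ℝ) ^ (-(e * (n + 1) : ℕ) : ℤ) = ((p : ℝ) ^ (e * (n + 1) : ℕ))⁻¹ := by
      rw [zpow_neg, zpow_natCast]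
    rw [hinv] at hnorm
    have h1 : ((p : ℝ) ^ (e * (n + 1) : ℕ))⁻¹ ≤ ((p : ℝ) ^ (n : ℕ))⁻¹ :=
      inv_anti₀ (by positivity) hple
    have h2 : ((p : ℝ) ^ (n : ℕ))⁻¹ < ‖((q : ℤ_[p]) ^ s - 1) * α + c‖ := by
      rw [inv_lt_comm₀ (by positivity) hpos]
      exact hn
    linarith
  -- produce the rational number
  refine ⟨-(c : ℚ) / ((q : ℚ) ^ s - 1), ?_, ?_, ?_⟩
  · have hden : (0 : ℚ) < (q : ℚ) ^ s - 1 := by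
      have : (2 : ℚ) ≤ (q : ℚ) := by exact_mod_cast hq2
      have h1 : (2 : ℚ) ≤ (q : ℚ) ^ s := by
        calc (2 : ℚ) = 2 ^ 1 := by norm_num
          _ ≤ (2 : ℚ) ^ s := by
            apply pow_le_pow_right₀ (by norm_num) hs1
          _ ≤ (q : ℚ) ^ s := by
            apply pow_le_pow_left₀ (by norm_num) this
      linarith
    rw [neg_div, neg_le, neg_neg, div_le_one hden]
    have : (c : ℚ) ≤ (q : ℚ) ^ s - 1 := by
      have : c + 1 ≤ q ^ s := hclt
      have h2 : ((c : ℚ)) + 1 ≤ ((q ^ s : ℕ) : ℚ) := by exact_mod_cast this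
      push_cast at h2
      linarith
    exact this
  · have hden : (0 : ℚ) < (q : ℚ) ^ s - 1 := by
      have : (2 : ℚ) ≤ (q : ℚ) := by exact_mod_cast hq2
      have h1 : (2 : ℚ) ≤ (q : ℚ) ^ s := by
        calc (2 : ℚ) = 2 ^ 1 := by norm_num
          _ ≤ (2 : ℚ) ^ s := by
            apply pow_le_pow_right₀ (by norm_num) hs1
          _ ≤ (q : ℚ) ^ s := by
            apply pow_le_pow_left₀ (by norm_num) this
      linarith
    apply div_neg_of_neg_of_pos
    · have : (0 : ℚ) < (c : ℚ) := by exact_mod_cast hNs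
      linarith
    · exact hden
  · -- the equality in ℚ_[p]
    have hQp : ((q : ℚ_[p]) ^ s - 1) * (α : ℚ_[p]) + (c : ℚ_[p]) = 0 := by
      have := congrArg (fun x : ℤ_[p] => (x : ℚ_[p])) hX0
      push_cast at this
      exact_mod_cast this
    have hden : ((q : ℚ_[p]) ^ s - 1) ≠ 0 := by
      have h1 : ((q : ℚ_[p]) ^ s) = ((q ^ s : ℕ) : ℚ_[p]) := by push_cast; ring
      rw [h1]
      intro hcontra
      have h2 : ((q ^ s : ℕ) : ℚ_[p]) = 1 := by linear_combination hcontra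
      have h3 : ((q ^ s : ℕ) : ℚ_[p]) = ((1 : ℕ) : ℚ_[p]) := by rw [h2]; norm_num
      have h4 : q ^ s = 1 := Nat.cast_injective h3
      have : 2 ^ 1 ≤ q ^ s := Nat.pow_le_pow_left hq2 s |>.trans' (Nat.pow_le_pow_right (by norm_num) hs1)
      omega
    have hcast : ((-(c : ℚ) / ((q : ℚ) ^ s - 1) : ℚ) : ℚ_[p])
        = -(c : ℚ_[p]) / ((q : ℚ_[p]) ^ s - 1) := by
      push_cast
      ring
    rw [hcast, eq_div_iff hden]
    linear_combination hQp
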